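/- arXiv:1510.07202 — 2 statements merged into one kernel-verified Lean document; each statement's English description precedes it below -/
import Mathlib

section
/- If μ is a computable, continuous (atomless) Borel probability measure on Cantor space 2^ω, then there is a computable order f such that g_μ(n) ≤ f(n) < g_μ(n+2) for every n, where g_μ is the granularity function of μ. -/
open Filter MeasureTheory

/-- The length-`n` initial segment of an infinite binary sequence, as a list. -/
def strTake (X : ℕ → Bool) (n : ℕ) : List Bool := (List.range n).map X

/-- The basic open cylinder of a binary string in Cantor space. -/
def cyl (σ : List Bool) : Set (ℕ → Bool) := {X | strTake X σ.length = σ}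

/-- A measure on Cantor space is computable if the values of the cylinders can be
uniformly approximated to any precision `2⁻ⁱ` by a computable function
(with dyadic rational values `f(σ,i)/2ⁱ`). -/
def ComputableMeasure (μ : Measure (ℕ → Bool)) : Prop :=
  ∃ f : List Bool × ℕ → ℕ, Computable f ∧
    ∀ σ i, |(μ (cyl σ)).toReal - (f (σ, i) : ℝ) / 2 ^ i| ≤ (2 : ℝ)⁻¹ ^ i

/-- A `μ`-Martin-Löf test: a uniformly c.e. sequence of sets of strings generating
open sets whose `μ`-measures are bounded by `2⁻ⁱ`. -/
def MLTest (μ : Measure (ℕ → Bool)) (V : ℕ → Set (List Bool)) : Prop :=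
  REPred (fun p : ℕ × List Bool => p.2 ∈ V p.1) ∧
    ∀ i, μ (⋃ σ ∈ V i, cyl σ) ≤ 2⁻¹ ^ i

/-- `X` is `μ`-Martin-Löf random if it passes every `μ`-Martin-Löf test. -/
def MLRandom (μ : Measure (ℕ → Bool)) (X : ℕ → Bool) : Prop :=
  ∀ V, MLTest μ V → ∃ i, X ∉ ⋃ σ ∈ V i, cyl σ

/-- The granularity of a (continuous) measure: the least `ℓ` such that every
string of length `ℓ` has cylinder of measure `< 2⁻ⁿ`. -/
noncomputable def granularity (μ : Measure (ℕ → Bool)) (n : ℕ) : ℕ :=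
  sInf {l | ∀ σ : List Bool, σ.length = l → μ (cyl σ) < 2⁻¹ ^ n}

/-- A computable order (per context: non-decreasing, unbounded, computable). -/
def ComputableOrder (f : ℕ → ℕ) : Prop :=
  Computable f ∧ Monotone f ∧ (∀ m, ∃ n, m ≤ f n)

lemma strTake_length (X : ℕ → Bool) (n : ℕ) : (strTake X n).length = n := by
  simp [strTake]

lemma strTake_take (X : ℕ → Bool) {m n : ℕ} (h : m ≤ n) :
    (strTake X n).take m = strTake X m := by
  simp [strTake, ← List.map_take, List.take_range, Nat.min_eq_left h]

lemma mem_cyl_strTake (X : ℕ → Bool) (n : ℕ) : X ∈ cyl (strTake X n) := by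
  simp [cyl, strTake_length]

lemma cyl_mono {σ τ : List Bool} (h : σ <+: τ) : cyl τ ⊆ cyl σ := by
  intro X hX
  have hlen : σ.length ≤ τ.length := h.length_le
  have : (strTake X τ.length).take σ.length = τ.take σ.length := by rw [hX]
  rw [strTake_take X hlen] at this
  show strTake X σ.length = σ
  rw [this]
  exact (List.prefix_iff_eq_take.mp h).symm

lemma cyl_nonempty (σ : List Bool) : (cyl σ).Nonempty := by
  refine ⟨fun i => σ.getD i false, ?_⟩
  show strTake _ σ.length = σ
  apply List.ext_getElem (by simp [strTake_length])
  intro i h1 h2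
  simp [strTake, List.getD_eq_getElem?_getD, List.getElem?_eq_getElem h2]

lemma cyl_eq_iInter (σ : List Bool) :
    cyl σ = ⋂ i ∈ Finset.range σ.length, {X : ℕ → Bool | X i = σ.getD i false} := by
  ext X
  simp only [cyl, Set.mem_setOf_eq, Set.mem_iInter, Finset.mem_range]
  constructor
  · intro h i hi
    have : (strTake X σ.length).getD i false = σ.getD i false := by rw [h]
    simpa [strTake, List.getD_eq_getElem?_getD, List.getElem?_eq_getElem, hi] using this
  · intro h
    apply List.ext_getElem (by simp [strTake_length])
    intro i h1 h2
    have := h i h2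
    simp [strTake, List.getD_eq_getElem?_getD, List.getElem?_eq_getElem h2] at this ⊢
    exact this

lemma measurableSet_cyl (σ : List Bool) : MeasurableSet (cyl σ) := by
  rw [cyl_eq_iInter]
  refine Finset.measurableSet_biInter _ fun i _ => ?_
  show MeasurableSet ((fun X : ℕ → Bool => X i) ⁻¹' {σ.getD i false})
  exact (measurable_pi_apply i) (MeasurableSet.of_discrete)

lemma isOpen_cyl (σ : List Bool) : IsOpen (cyl σ) := by
  rw [cyl_eq_iInter]
  refine isOpen_biInter_finset fun i _ => ?_
  show IsOpen ((fun X : ℕ → Bool => X i) ⁻¹' {σ.getD i false})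
  exact (continuous_apply i).isOpen_preimage _ (isOpen_discrete _)

lemma singleton_eq_iInter (X : ℕ → Bool) : {X} = ⋂ n, cyl (strTake X n) := by
  ext Y
  simp only [Set.mem_singleton_iff, Set.mem_iInter]
  constructor
  · rintro rfl n; exact mem_cyl_strTake Y n
  · intro h
    funext i
    have := h (i + 1)
    replace this : strTake Y (i+1) = strTake X (i+1) := by
      have h2 := this; rw [cyl, Set.mem_setOf_eq, strTake_length] at h2; exact h2
    have : (strTake Y (i+1)).getD i false = (strTake X (i+1)).getD i false := by rw [this]
    simpa [strTake, List.getD_eq_getElem?_getD, List.getElem?_eq_getElem,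
      Nat.lt_succ_self] using this

lemma strTake_prefix (X : ℕ → Bool) {m n : ℕ} (h : m ≤ n) :
    strTake X m <+: strTake X n := by
  rw [← strTake_take X h]; exact List.take_prefix _ _

section Meas
variable (μ : Measure (ℕ → Bool)) [IsProbabilityMeasure μ]

lemma tendsto_cyl_measure (hcont : ∀ X : ℕ → Bool, μ {X} = 0) (X : ℕ → Bool) :
    Tendsto (fun n => μ (cyl (strTake X n))) atTop (nhds 0) := by
  have h1 : Tendsto (μ ∘ fun n => cyl (strTake X n)) atTop
      (nhds (μ (⋂ n, cyl (strTake X n)))) := by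
    apply tendsto_measure_iInter_atTop
    · exact fun n => (measurableSet_cyl _).nullMeasurableSet
    · intro m n hmn
      exact cyl_mono (strTake_prefix X hmn)
    · exact ⟨0, by simp [measure_ne_top]⟩
  rw [← singleton_eq_iInter, hcont X] at h1
  exact h1

/-- Key compactness lemma. -/
lemma exists_level (hcont : ∀ X : ℕ → Bool, μ {X} = 0) {ε : ENNReal} (hε : 0 < ε) :
    ∃ l : ℕ, ∀ σ : List Bool, σ.length = l → μ (cyl σ) < ε := by
  have H : ∀ X : ℕ → Bool, ∃ n, μ (cyl (strTake X n)) < ε := by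
    intro X
    have := (tendsto_cyl_measure μ hcont X).eventually_lt_const hε
    exact this.exists
  choose nX hnX using H
  have hcover : (Set.univ : Set (ℕ → Bool)) ⊆ ⋃ X, cyl (strTake X (nX X)) :=
    fun X _ => Set.mem_iUnion.mpr ⟨X, mem_cyl_strTake X (nX X)⟩
  obtain ⟨t, ht⟩ := isCompact_univ.elim_finite_subcover _
    (fun X => isOpen_cyl (strTake X (nX X))) hcover
  refine ⟨t.sup nX, fun σ hσ => ?_⟩
  obtain ⟨Y, hY⟩ := cyl_nonempty σ
  obtain ⟨X, hXt, hYX⟩ : ∃ X ∈ t, Y ∈ cyl (strTake X (nX X)) := by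
    simpa using ht (Set.mem_univ Y)
  have hle : nX X ≤ σ.length := hσ ▸ Finset.le_sup hXt
  have hpre : strTake X (nX X) <+: σ := by
    have h1 : strTake Y (nX X) = strTake X (nX X) := by
      have := hYX; rw [cyl, Set.mem_setOf_eq, strTake_length] at this; exact this
    have h2 : strTake Y σ.length = σ := hY
    rw [← h1, ← h2]
    exact strTake_prefix Y hle
  calc μ (cyl σ) ≤ μ (cyl (strTake X (nX X))) := measure_mono (cyl_mono hpre)
    _ < ε := hnX X

lemma granSet_nonempty (hcont : ∀ X : ℕ → Bool, μ {X} = 0) (n : ℕ) :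
    {l | ∀ σ : List Bool, σ.length = l → μ (cyl σ) < 2⁻¹ ^ n}.Nonempty :=
  exists_level μ hcont (by
    apply ENNReal.pow_pos
    exact ENNReal.inv_pos.mpr ENNReal.ofNat_ne_top)

omit [IsProbabilityMeasure μ] in
lemma granSet_upward {n l l' : ℕ} (h : l ≤ l')
    (hl : l ∈ {l | ∀ σ : List Bool, σ.length = l → μ (cyl σ) < 2⁻¹ ^ n}) :
    l' ∈ {l | ∀ σ : List Bool, σ.length = l → μ (cyl σ) < 2⁻¹ ^ n} := by
  intro σ hσ
  have h1 : (σ.take l).length = l := by simp [hσ, h]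
  calc μ (cyl σ) ≤ μ (cyl (σ.take l)) := measure_mono (cyl_mono (List.take_prefix l σ))
    _ < 2⁻¹ ^ n := hl _ h1

lemma granularity_le_iff (hcont : ∀ X : ℕ → Bool, μ {X} = 0) {n l : ℕ} :
    granularity μ n ≤ l ↔ ∀ σ : List Bool, σ.length = l → μ (cyl σ) < 2⁻¹ ^ n := by
  constructor
  · intro h
    exact granSet_upward μ h (Nat.sInf_mem (granSet_nonempty μ hcont n))
  · intro h
    exact Nat.sInf_le h

end Meas

/-! ### Computability infrastructure -/

def bits (l k : ℕ) : List Bool := (List.range l).map (fun i => decide (k / 2 ^ i % 2 = 1))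

lemma bits_length (l k : ℕ) : (bits l k).length = l := by simp [bits]

lemma bits_succ (l k : ℕ) :
    bits (l + 1) k = decide (k % 2 = 1) :: bits l (k / 2) := by
  simp only [bits, List.range_succ_eq_map, List.map_cons, List.map_map]
  congr 1
  · simp
  · apply List.map_congr_left
    intro i _
    simp only [Function.comp_apply]
    congr 1
    rw [pow_succ', Nat.div_div_eq_div_mul]

lemma bits_surj (σ : List Bool) : ∃ k < 2 ^ σ.length, bits σ.length k = σ := by
  induction σ with
  | nil => exact ⟨0, by simp, rfl⟩
  | cons b τ ih =>
    obtain ⟨k', hk', hbits⟩ := ih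
    refine ⟨(cond b 1 0) + 2 * k', ?_, ?_⟩
    · have : (2:ℕ) ^ (b :: τ).length = 2 * 2 ^ τ.length := by
        simp [List.length_cons, pow_succ]; ring
      rw [this]; cases b <;> simp <;> omega
    · show bits (τ.length + 1) _ = b :: τ
      rw [bits_succ]
      have h1 : (cond b 1 0 + 2 * k') / 2 = k' := by cases b <;> simp <;> omega
      have h2 : (decide ((cond b 1 0 + 2 * k') % 2 = 1)) = b := by
        cases b <;> simp [Nat.add_mul_mod_self_left]
      rw [h1, h2, hbits]

lemma primrec_bits : Primrec₂ bits := by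
  have ppow : Primrec₂ ((· ^ ·) : ℕ → ℕ → ℕ) := Primrec₂.unpaired'.mp Nat.Primrec.pow
  have hinner : Primrec₂ fun (p : ℕ × ℕ) (i : ℕ) => decide (p.2 / 2 ^ i % 2 = 1) := by
    apply Primrec₂.mk
    have h1 : Primrec fun q : (ℕ × ℕ) × ℕ => q.1.2 / 2 ^ q.2 % 2 :=
      Primrec.nat_mod.comp
        (Primrec.nat_div.comp (Primrec.snd.comp Primrec.fst)
          (ppow.comp (Primrec.const 2) Primrec.snd))
        (Primrec.const 2)
    exact (Primrec.eq.comp h1 (Primrec.const 1)).decide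
  have hrange : Primrec fun p : ℕ × ℕ => List.range p.1 :=
    Primrec.list_range.comp Primrec.fst
  have := Primrec.list_map hrange hinner
  exact Primrec₂.mk (this.of_eq fun p => by simp [bits])

section Chk
variable (gfun : List Bool × ℕ → ℕ)

def chkAux (p : ℕ × ℕ) (m : ℕ) : Bool :=
  Nat.rec true (fun y IH => IH && decide (gfun (bits p.2 y, p.1 + 3) ≤ 5)) m

def chk (p : ℕ × ℕ) : Bool := chkAux gfun p (2 ^ p.2)

lemma chkAux_eq_true (p : ℕ × ℕ) (m : ℕ) :
    chkAux gfun p m = true ↔ ∀ k < m, gfun (bits p.2 k, p.1 + 3) ≤ 5 := by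
  induction m with
  | zero => simp [chkAux]
  | succ m ih =>
    show (chkAux gfun p m && _) = true ↔ _
    rw [Bool.and_eq_true, ih]
    constructor
    · rintro ⟨h1, h2⟩ k hk
      rcases Nat.lt_succ_iff_lt_or_eq.mp hk with h | rfl
      · exact h1 k h
      · simpa using h2
    · intro h
      exact ⟨fun k hk => h k (hk.trans (Nat.lt_succ_self m)),
        by simpa using h m (Nat.lt_succ_self m)⟩

lemma chk_eq_true_iff (n l : ℕ) :
    chk gfun (n, l) = true ↔ ∀ σ : List Bool, σ.length = l → gfun (σ, n + 3) ≤ 5 := by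
  rw [chk, chkAux_eq_true]
  constructor
  · intro h σ hσ
    obtain ⟨k, hk, hbits⟩ := bits_surj σ
    rw [hσ] at hk hbits
    simpa [hbits] using h k hk
  · intro h k _
    exact h _ (bits_length l k)

lemma computable_chk (hg : Computable gfun) : Computable (chk gfun) := by
  have hh : Computable₂ fun (p : ℕ × ℕ) (q : ℕ × Bool) =>
      q.2 && decide (gfun (bits p.2 q.1, p.1 + 3) ≤ 5) := by
    have harg : Computable fun x : (ℕ × ℕ) × ℕ × Bool =>
        (bits x.1.2 x.2.1, x.1.1 + 3) :=
      Computable.pair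
        (primrec_bits.to_comp.comp (Computable.snd.comp Computable.fst)
          (Computable.fst.comp Computable.snd))
        ((Primrec.nat_add.comp Primrec.id (Primrec.const 3)).to_comp.comp
          (Computable.fst.comp Computable.fst))
    have hdec : Computable fun x : (ℕ × ℕ) × ℕ × Bool =>
        decide (gfun (bits x.1.2 x.2.1, x.1.1 + 3) ≤ 5) :=
      ((Primrec.nat_le.comp Primrec.id (Primrec.const 5)).decide.to_comp).comp
        (hg.comp harg)
    exact Computable₂.mk
      (Primrec.and.to_comp.comp (Computable.snd.comp Computable.snd) hdec)
  have hf : Computable fun p : ℕ × ℕ => 2 ^ p.2 :=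
    ((Primrec₂.unpaired'.mp Nat.Primrec.pow).comp (Primrec.const 2) Primrec.snd).to_comp
  have := Computable.nat_rec hf (Computable.const true) hh
  exact this.of_eq fun p => rfl

end Chk

section Find
variable (gfun : List Bool × ℕ → ℕ) (hex : ∀ n, ∃ l, chk gfun (n, l) = true)

def ffind (n : ℕ) : ℕ := Nat.find (hex n)

lemma ffind_spec (n : ℕ) : chk gfun (n, ffind gfun hex n) = true := Nat.find_spec (hex n)

lemma ffind_min {n m : ℕ} (h : m < ffind gfun hex n) : chk gfun (n, m) = false :=
  Bool.eq_false_iff.mpr (Nat.find_min (hex n) h)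

lemma computable_ffind (hg : Computable gfun) : Computable (ffind gfun hex) := by
  have hp : Partrec₂ fun (n l : ℕ) => (Part.some (chk gfun (n, l)) : Part Bool) :=
    Computable₂.partrec₂ (Computable₂.mk (computable_chk gfun hg))
  have := Partrec.rfind hp
  apply Partrec.of_eq_tot this
  intro n
  apply Nat.mem_rfind.mpr
  constructor
  · exact Part.mem_some_iff.mpr (ffind_spec gfun hex n).symm
  · intro m hm
    exact Part.mem_some_iff.mpr (ffind_min gfun hex hm).symm

def fmax (n : ℕ) : ℕ := Nat.rec (ffind gfun hex 0) (fun m IH => max (ffind gfun hex (m + 1)) IH) n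

lemma fmax_succ (n : ℕ) :
    fmax gfun hex (n + 1) = max (ffind gfun hex (n + 1)) (fmax gfun hex n) := rfl

lemma fmax_monotone : Monotone (fmax gfun hex) :=
  monotone_nat_of_le_succ fun n => by rw [fmax_succ]; exact le_max_right _ _

lemma ffind_le_fmax {k n : ℕ} (h : k ≤ n) : ffind gfun hex k ≤ fmax gfun hex n := by
  induction n with
  | zero => rw [Nat.le_zero.mp h]; exact le_refl _
  | succ n ih =>
    rw [fmax_succ]
    rcases Nat.lt_succ_iff_lt_or_eq.mp (Nat.lt_succ_of_le h) with h' | rfl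
    · exact le_max_of_le_right (ih (Nat.lt_succ_iff.mp h'))
    · exact le_max_left _ _

lemma fmax_eq_ffind (n : ℕ) : ∃ k ≤ n, fmax gfun hex n = ffind gfun hex k := by
  induction n with
  | zero => exact ⟨0, le_refl 0, rfl⟩
  | succ n ih =>
    obtain ⟨k, hk, hfk⟩ := ih
    rw [fmax_succ]
    rcases max_cases (ffind gfun hex (n + 1)) (fmax gfun hex n) with ⟨h, _⟩ | ⟨h, _⟩
    · exact ⟨n + 1, le_refl _, h⟩
    · exact ⟨k, hk.trans (Nat.le_succ n), h.trans hfk⟩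

lemma computable_fmax (hg : Computable gfun) : Computable (fmax gfun hex) := by
  have hff := computable_ffind gfun hex hg
  have hh : Computable₂ fun (_ : ℕ) (q : ℕ × ℕ) => max (ffind gfun hex (q.1 + 1)) q.2 :=
    Computable₂.mk (Primrec.nat_max.to_comp.comp
      (hff.comp (Computable.succ.comp (Computable.fst.comp Computable.snd)))
      (Computable.snd.comp Computable.snd))
  have := Computable.nat_rec Computable.id (Computable.const (ffind gfun hex 0)) hh
  exact this.of_eq fun n => rfl

end Find

/-! ### Numeric helpers -/

lemma approx_small {r A : ℝ} {g n : ℕ} (hA : A = (g : ℝ) / 2 ^ (n + 3))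
    (hap : |r - A| ≤ (2 : ℝ)⁻¹ ^ (n + 3)) (hr : r < (2 : ℝ)⁻¹ ^ (n + 3)) : g ≤ 5 := by
  have hpow : (0 : ℝ) < 2 ^ (n + 3) := by positivity
  have hip : (2 : ℝ)⁻¹ ^ (n + 3) = (2 ^ (n + 3))⁻¹ := by rw [inv_pow]
  rw [abs_le] at hap
  have hg2 : (g : ℝ) < 2 := by
    rw [hip] at hap hr
    have h1 : A ≤ r + (2 ^ (n + 3) : ℝ)⁻¹ := by linarith [hap.2]
    rw [hA] at h1
    have h2 : (g : ℝ) / 2 ^ (n + 3) < 2 * (2 ^ (n + 3) : ℝ)⁻¹ := by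
      have := hr; rw [inv_eq_one_div] at *; linarith
    rw [div_lt_iff₀ hpow] at h2
    have : 2 * (2 ^ (n + 3) : ℝ)⁻¹ * 2 ^ (n + 3) = 2 := by field_simp
    linarith [this ▸ h2]
  have : g < 2 := by exact_mod_cast hg2
  omega

lemma approx_le5 {r A : ℝ} {g n : ℕ} (hA : A = (g : ℝ) / 2 ^ (n + 3))
    (hap : |r - A| ≤ (2 : ℝ)⁻¹ ^ (n + 3)) (hg : g ≤ 5) : r < (2 : ℝ)⁻¹ ^ n := by
  have hpow : (0 : ℝ) < 2 ^ n := by positivity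
  have h8 : (2 : ℝ) ^ (n + 3) = 8 * 2 ^ n := by ring
  rw [abs_le] at hap
  have hA5 : A ≤ 5 / (8 * 2 ^ n) := by
    rw [hA, h8]
    apply div_le_div_of_nonneg_right ?_ (by positivity) |>.trans_eq rfl
    · exact_mod_cast hg
  have hinv : (2 : ℝ)⁻¹ ^ (n + 3) = 1 / (8 * 2 ^ n) := by
    rw [inv_pow, h8]; field_simp
  have hr : r ≤ A + (2 : ℝ)⁻¹ ^ (n + 3) := by linarith [hap.1]
  have hsum : (5:ℝ) / (8 * 2 ^ n) + 1 / (8 * 2 ^ n) = 6 / (8 * 2 ^ n) := by ring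
  have : r ≤ 6 / (8 * 2 ^ n) := by rw [hinv] at hr; linarith
  have hlt : (6 : ℝ) / (8 * 2 ^ n) < (2 : ℝ)⁻¹ ^ n := by
    rw [inv_pow, inv_eq_one_div]
    rw [div_lt_div_iff₀ (by positivity) (by positivity)]
    nlinarith
  linarith

lemma approx_ge6 {r A : ℝ} {g n : ℕ} (hA : A = (g : ℝ) / 2 ^ (n + 3))
    (hap : |r - A| ≤ (2 : ℝ)⁻¹ ^ (n + 3)) (hg : 6 ≤ g) : (2 : ℝ)⁻¹ ^ (n + 1) < r := by
  have hpow : (0 : ℝ) < 2 ^ n := by positivity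
  have h8 : (2 : ℝ) ^ (n + 3) = 8 * 2 ^ n := by ring
  rw [abs_le] at hap
  have hA6 : 6 / (8 * 2 ^ n) ≤ A := by
    rw [hA, h8]
    apply div_le_div_of_nonneg_right ?_ (by positivity)
    · exact_mod_cast hg
  have hinv : (2 : ℝ)⁻¹ ^ (n + 3) = 1 / (8 * 2 ^ n) := by
    rw [inv_pow, h8]; field_simp
  have hr : A - (2 : ℝ)⁻¹ ^ (n + 3) ≤ r := by linarith [hap.2]
  have hsum : (6:ℝ) / (8 * 2 ^ n) - 1 / (8 * 2 ^ n) = 5 / (8 * 2 ^ n) := by ring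
  have h5 : (5 : ℝ) / (8 * 2 ^ n) ≤ r := by rw [hinv] at hr; linarith
  have hlt : (2 : ℝ)⁻¹ ^ (n + 1) < (5 : ℝ) / (8 * 2 ^ n) := by
    rw [inv_pow, inv_eq_one_div]
    rw [div_lt_div_iff₀ (by positivity) (by positivity)]
    have : (2 : ℝ) ^ (n + 1) = 2 * 2 ^ n := by ring
    nlinarith
  linarith

/-! ### more measure lemmas -/

lemma ennreal_pow_toReal (n : ℕ) : ((2⁻¹ : ENNReal) ^ n).toReal = (2 : ℝ)⁻¹ ^ n := by
  simp [ENNReal.toReal_pow, ENNReal.toReal_inv]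

lemma ennreal_pow_ne_top (n : ℕ) : ((2⁻¹ : ENNReal) ^ n) ≠ ⊤ :=
  ENNReal.pow_ne_top (by simp)

section Meas2
variable (μ : Measure (ℕ → Bool)) [IsProbabilityMeasure μ]

lemma meas_lt_iff (σ : List Bool) (n : ℕ) :
    μ (cyl σ) < 2⁻¹ ^ n ↔ (μ (cyl σ)).toReal < (2 : ℝ)⁻¹ ^ n := by
  rw [← ennreal_pow_toReal n]
  exact (ENNReal.toReal_lt_toReal (measure_ne_top μ _) (ennreal_pow_ne_top n)).symm

lemma meas_gt_iff (σ : List Bool) (n : ℕ) :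
    (2⁻¹ : ENNReal) ^ n < μ (cyl σ) ↔ (2 : ℝ)⁻¹ ^ n < (μ (cyl σ)).toReal := by
  rw [← ennreal_pow_toReal n]
  exact (ENNReal.toReal_lt_toReal (ennreal_pow_ne_top n) (measure_ne_top μ _)).symm

lemma strTake_succ (X : ℕ → Bool) (n : ℕ) :
    strTake X (n + 1) = strTake X n ++ [X n] := by
  simp [strTake, List.range_succ]

lemma cyl_split (σ : List Bool) :
    cyl σ ⊆ cyl (σ ++ [false]) ∪ cyl (σ ++ [true]) := by
  intro X hX
  have hmem : X ∈ cyl (σ ++ [X σ.length]) := by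
    show strTake X (σ ++ [X σ.length]).length = σ ++ [X σ.length]
    rw [List.length_append, List.length_singleton, strTake_succ, hX]
  cases h : X σ.length
  · left; rwa [h] at hmem
  · right; rwa [h] at hmem

lemma cyl_nil : cyl ([] : List Bool) = Set.univ := by
  ext X; simp [cyl, strTake]

lemma exists_pos_cyl (m : ℕ) : ∃ σ : List Bool, σ.length = m ∧ μ (cyl σ) ≠ 0 := by
  by_contra h
  push_neg at h
  have h0 : μ (⋃ s : {σ : List Bool // σ.length = m}, cyl s.1) = 0 :=
    measure_iUnion_null fun s => h s.1 s.2
  have hsub : (Set.univ : Set (ℕ → Bool)) ⊆ ⋃ s : {σ : List Bool // σ.length = m}, cyl s.1 :=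
    fun X _ => Set.mem_iUnion.mpr ⟨⟨strTake X m, strTake_length X m⟩, mem_cyl_strTake X m⟩
  have : (1 : ENNReal) ≤ 0 := by
    calc (1 : ENNReal) = μ Set.univ := (measure_univ).symm
      _ ≤ μ _ := measure_mono hsub
      _ = 0 := h0
  simp at this

end Meas2

theorem stmt10 (μ : Measure (ℕ → Bool)) (hprob : IsProbabilityMeasure μ)
    (hcomp : ComputableMeasure μ) (hcont : ∀ X : ℕ → Bool, μ {X} = 0) :
    ∃ f : ℕ → ℕ, ComputableOrder f ∧
      ∀ n, granularity μ n ≤ f n ∧ f n < granularity μ (n + 2) := by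
  obtain ⟨gfun, hgcomp, happrox⟩ := hcomp
  have hex : ∀ n, ∃ l, chk gfun (n, l) = true := by
    intro n
    obtain ⟨l, hl⟩ := exists_level μ hcont (ε := 2⁻¹ ^ (n + 3))
      (by apply ENNReal.pow_pos; exact ENNReal.inv_pos.mpr ENNReal.ofNat_ne_top)
    refine ⟨l, (chk_eq_true_iff _ _ _).mpr fun σ hσ => ?_⟩
    exact approx_small rfl (happrox σ (n + 3)) ((meas_lt_iff μ σ (n + 3)).mp (hl σ hσ))
  have hgle : ∀ n, granularity μ n ≤ ffind gfun hex n := by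
    intro n
    rw [granularity_le_iff μ hcont]
    intro σ hσ
    have hch := (chk_eq_true_iff gfun n _).mp (ffind_spec gfun hex n) σ hσ
    rw [meas_lt_iff]
    exact approx_le5 rfl (happrox σ (n + 3)) hch
  have hflt : ∀ n, ffind gfun hex n < granularity μ (n + 2) := by
    intro n
    by_contra hcon
    push_neg at hcon
    rw [granularity_le_iff μ hcont] at hcon
    cases h0 : ffind gfun hex n with
    | zero =>
      have h1 := hcon [] (by rw [h0]; simp)
      rw [cyl_nil, measure_univ] at h1
      have hle1 : (2⁻¹ : ENNReal) ^ (n + 2) ≤ 1 :=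
        pow_le_one' (ENNReal.inv_le_one.mpr one_le_two) _
      exact absurd h1 (not_lt.mpr hle1)
    | succ m =>
      have hfalse : chk gfun (n, m) = false :=
        ffind_min gfun hex (h0 ▸ Nat.lt_succ_self m)
      have hnot : ¬ ∀ σ : List Bool, σ.length = m → gfun (σ, n + 3) ≤ 5 := by
        intro hall
        rw [← chk_eq_true_iff gfun n m] at hall
        rw [hfalse] at hall
        exact Bool.false_ne_true hall
      push_neg at hnot
      obtain ⟨σ, hσlen, hσg⟩ := hnot
      have hgt : (2⁻¹ : ENNReal) ^ (n + 1) < μ (cyl σ) := by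
        rw [meas_gt_iff]
        exact approx_ge6 rfl (happrox σ (n + 3)) (by omega)
      have hc0 := hcon (σ ++ [false]) (by simp [hσlen, h0])
      have hc1 := hcon (σ ++ [true]) (by simp [hσlen, h0])
      have hsum : μ (cyl σ) ≤ μ (cyl (σ ++ [false])) + μ (cyl (σ ++ [true])) :=
        (measure_mono (cyl_split σ)).trans (measure_union_le _ _)
      have hh : μ (cyl σ) < 2⁻¹ ^ (n + 1) := by
        calc μ (cyl σ) ≤ _ := hsum
          _ < 2⁻¹ ^ (n + 2) + 2⁻¹ ^ (n + 2) := ENNReal.add_lt_add hc0 hc1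
          _ = 2⁻¹ ^ (n + 1) := by
            rw [pow_succ, ← mul_add, ENNReal.inv_two_add_inv_two, mul_one]
      exact lt_asymm hgt hh
  have hgmono : Monotone (granularity μ) := by
    intro k n hkn
    rw [granularity_le_iff μ hcont]
    intro σ hσ
    have hmem := Nat.sInf_mem (granSet_nonempty μ hcont n)
    exact lt_of_lt_of_le (hmem σ hσ)
      (pow_le_pow_right_of_le_one' (ENNReal.inv_le_one.mpr one_le_two) hkn)
  have hunb : ∀ m, ∃ n, m ≤ granularity μ n := by
    intro m
    obtain ⟨σ, hσlen, hσpos⟩ := exists_pos_cyl μ m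
    obtain ⟨n, hn⟩ := ENNReal.exists_inv_two_pow_lt hσpos
    refine ⟨n, ?_⟩
    by_contra hcon
    push_neg at hcon
    have h1 : granularity μ n ≤ m := le_of_lt hcon
    rw [granularity_le_iff μ hcont] at h1
    exact absurd (h1 σ hσlen) (not_lt.mpr hn.le)
  refine ⟨fmax gfun hex, ⟨computable_fmax gfun hex hgcomp, fmax_monotone gfun hex, ?_⟩, ?_⟩
  · intro m
    obtain ⟨n, hn⟩ := hunb m
    exact ⟨n, hn.trans ((hgle n).trans (ffind_le_fmax gfun hex (le_refl n)))⟩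
  · intro n
    refine ⟨(hgle n).trans (ffind_le_fmax gfun hex (le_refl n)), ?_⟩
    obtain ⟨k, hk, hfk⟩ := fmax_eq_ffind gfun hex n
    rw [hfk]
    exact lt_of_lt_of_le (hflt k) (hgmono (by omega))
end

section
/- If g : ℕ → ℕ is a strictly increasing function that is not dominated by any computable function, and h and ℓ are computable orders, then there exist infinitely many n such that ℓ(g(n)) < h(g(n+1)). -/
open Filter

theorem stmt15 (g h l : ℕ → ℕ) (hg : StrictMono g)
    (hnd : ∀ f : ℕ → ℕ, Computable f → ∃ᶠ n in atTop, f n < g n)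
    (hh : ComputableOrder h) (hl : ComputableOrder l) :
    ∃ᶠ n in atTop, l (g n) < h (g (n + 1)) := by
  obtain ⟨hhc, hhm, hhu⟩ := hh
  obtain ⟨hlc, hlm, hlu⟩ := hl
  by_contra hcon
  rw [Filter.not_frequently] at hcon
  rw [Filter.eventually_atTop] at hcon
  obtain ⟨N, hN⟩ := hcon
  simp only [not_lt] at hN
  -- key existence: for each m there is k with l m < h k
  have hex : ∀ m, ∃ k, l m < h k := by
    intro m
    obtain ⟨n, hn⟩ := hhu (l m + 1)
    exact ⟨n, by omega⟩
  set F : ℕ → ℕ := fun m => Nat.find (hex m) with hF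
  have hFspec : ∀ m, l m < h (F m) := fun m => Nat.find_spec (hex m)
  have hFmono : Monotone F := by
    intro a b hab
    exact Nat.find_min' (hex a) (lt_of_le_of_lt (hlm hab) (hFspec b))
  -- F is computable
  have hFc : Computable F := by
    have hp : Computable₂ (fun m k : ℕ => (decide (l m < h k) : Bool)) :=
      Primrec.nat_lt.decide.to_comp.comp (hlc.comp Computable.fst) (hhc.comp Computable.snd)
    have hpr : Partrec fun m => Nat.rfind (fun k => Part.some (decide (l m < h k))) :=
      Partrec.rfind hp.partrec₂
    refine Partrec.of_eq_tot hpr ?_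
    intro m
    refine Nat.mem_rfind.2 ?_
    constructor
    · simpa using hFspec m
    · intro k hk
      simp only [Part.mem_some_iff]
      have := Nat.find_min (hex m) hk
      simpa using this
  -- iterate F starting from g N
  set f : ℕ → ℕ := fun n => Nat.rec (g N) (fun _ ih => F ih) n with hf
  have hfc : Computable f := by
    have := Computable.nat_rec (Computable.id) (Computable.const (g N))
      ((hFc.comp Computable.snd).comp Computable.snd).to₂ (σ := ℕ) (α := ℕ)
    exact this.of_eq (fun n => rfl)
  -- step bound
  have hstep : ∀ n, N ≤ n → g (n + 1) < F (g n) := by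
    intro n hn
    by_contra hle
    push_neg at hle
    have := hhm hle
    have h1 := hN n hn
    have h2 := hFspec (g n)
    omega
  have hbound : ∀ k, g (N + k) ≤ f k := by
    intro k
    induction k with
    | zero => simp [hf]
    | succ k ih =>
      have h1 : g (N + k + 1) < F (g (N + k)) := hstep (N + k) (by omega)
      have h2 : F (g (N + k)) ≤ F (f k) := hFmono ih
      calc g (N + (k + 1)) = g (N + k + 1) := by ring_nf
        _ ≤ F (g (N + k)) := le_of_lt h1
        _ ≤ F (f k) := h2
        _ = f (k + 1) := rfl
  have hdom : ∀ k, g k ≤ f k := fun k =>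
    le_trans (hg.monotone (by omega : k ≤ N + k)) (hbound k)
  obtain ⟨n, hn⟩ := (hnd f hfc).exists
  exact absurd (hdom n) (not_le.mpr hn)
end
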